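/- The Amoeba partial order 𝔸 has (ω₁,ω)-caliber. Concretely: for every uncountable set T of open subsets of Cantor space 2^ω, each of Lebesgue (uniform product) measure strictly less than 1/2, there exists a countably infinite subset F ⊆ T such that μ(⋃F) < 1/2 (i.e. F has a common lower bound in 𝔸). -/

import Mathlib

open MeasureTheory

noncomputable section

/-- The binary-digit map sending `r ∈ [0,1)` to its sequence of binary digits,
so `binDigits r n` is the `n`-th binary digit of `r`. -/
def binDigits (r : ℝ) : ℕ → Bool := fun n => decide (⌊r * 2 ^ (n + 1)⌋ % 2 = 1)

/-- The uniform product ("coin-flipping") probability measure `μ` on Cantor space `2^ω`,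
realized as the pushforward of Lebesgue measure on `[0,1)` under the binary-digit map. -/
def μC : Measure (ℕ → Bool) := (volume.restrict (Set.Ico (0 : ℝ) 1)).map binDigits

/-- The basic clopen cylinder `[σ]` determined by a finite binary string `σ`. -/
def cyl (σ : List Bool) : Set (ℕ → Bool) :=
  {f | ∀ i : ℕ, ∀ h : i < σ.length, f i = σ.get ⟨i, h⟩}

open scoped ENNReal

/-- Pigeonhole: a map from an uncountable set into a countable set has an uncountable fiber. -/
lemma exists_uncountable_fiber {α β : Type*} {s : Set α} {f : α → β} {r : Set β}
    (hr : r.Countable) (hf : ∀ a ∈ s, f a ∈ r) (hs : ¬ s.Countable) :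
    ∃ b, ¬ (s ∩ f ⁻¹' {b}).Countable := by
  by_contra h
  push_neg at h
  apply hs
  have hsub : s ⊆ ⋃ b ∈ r, (s ∩ f ⁻¹' {b}) := by
    intro a ha
    exact Set.mem_biUnion (hf a ha) ⟨ha, rfl⟩
  exact (hr.biUnion fun b _ => h b).mono hsub

/-- Inner approximation of an open set of finite measure by a finite union of
basic open sets from the countable basis. -/
lemma exists_finite_basis_approx {A : Set (ℕ → Bool)} (hA : IsOpen A) (hfin : μC A ≠ ⊤)
    {δ : ℝ≥0∞} (hδ : 0 < δ) :
    ∃ t : Set (Set (ℕ → Bool)), t.Finite ∧ t ⊆ TopologicalSpace.countableBasis (ℕ → Bool) ∧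
      ⋃₀ t ⊆ A ∧ μC (A \ ⋃₀ t) < δ := by
  obtain ⟨S, hSB, rfl⟩ :=
    (TopologicalSpace.isBasis_countableBasis (ℕ → Bool)).open_eq_sUnion hA
  rcases S.eq_empty_or_nonempty with rfl | hSne
  · exact ⟨∅, Set.finite_empty, Set.empty_subset _, subset_rfl, by simpa using hδ⟩
  have hSc : S.Countable := (TopologicalSpace.countable_countableBasis _).mono hSB
  obtain ⟨g, rfl⟩ := hSc.exists_eq_range hSne
  have hgB : ∀ i, g i ∈ TopologicalSpace.countableBasis (ℕ → Bool) := fun i =>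
    hSB (Set.mem_range_self i)
  rw [Set.sUnion_range] at hfin ⊢
  have hmeas : ∀ N, MeasurableSet (Set.accumulate g N) := by
    intro N
    apply MeasurableSet.biUnion (Set.to_countable _)
    intro j _
    exact (TopologicalSpace.isOpen_of_mem_countableBasis (hgB j)).measurableSet
  have hsub : ∀ N : ℕ, Set.accumulate g N ⊆ ⋃ i, g i := by
    intro N
    conv_rhs => rw [← Set.iUnion_accumulate (s := g)]
    exact Set.subset_iUnion (Set.accumulate g) N
  have key : ∃ N, μC ((⋃ i, g i) \ Set.accumulate g N) < δ := by
    rcases eq_or_ne (μC (⋃ i, g i)) 0 with h0 | h0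
    · exact ⟨0, lt_of_le_of_lt (le_trans (measure_mono Set.diff_subset) h0.le) hδ⟩
    rcases eq_or_ne δ ⊤ with rfl | hδtop
    · exact ⟨0, lt_of_le_of_lt (measure_mono Set.diff_subset) (lt_top_iff_ne_top.2 hfin)⟩
    by_contra hcon
    push_neg at hcon
    have hAccle : ∀ N, μC (Set.accumulate g N) ≤ μC (⋃ i, g i) - δ := by
      intro N
      apply ENNReal.le_sub_of_add_le_right hδtop
      calc μC (Set.accumulate g N) + δ
          ≤ μC (Set.accumulate g N) + μC ((⋃ i, g i) \ Set.accumulate g N) :=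
            add_le_add_right (hcon N) _
        _ = μC (Set.accumulate g N) + (μC (⋃ i, g i) - μC (Set.accumulate g N)) := by
            rw [measure_diff (hsub N) (hmeas N).nullMeasurableSet
              (ne_top_of_le_ne_top hfin (measure_mono (hsub N)))]
        _ = μC (⋃ i, g i) := by
            rw [add_comm, tsub_add_cancel_of_le (measure_mono (hsub N))]
    have : μC (⋃ i, g i) ≤ μC (⋃ i, g i) - δ :=
      le_trans (le_of_eq (measure_iUnion_eq_iSup_accumulate (f := g))) (iSup_le hAccle)
    exact absurd (lt_of_le_of_lt this (ENNReal.sub_lt_self hfin h0 hδ.ne'))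
      (lt_irrefl _)
  obtain ⟨N, hN⟩ := key
  refine ⟨g '' {j | j ≤ N}, (Set.finite_Iic N).image g, ?_, ?_, ?_⟩
  · rintro b ⟨j, _, rfl⟩
    exact hgB j
  · rw [Set.sUnion_image]
    exact fun x hx => by
      rcases Set.mem_iUnion₂.1 hx with ⟨j, _, hj⟩
      exact Set.mem_iUnion.2 ⟨j, hj⟩
  · have : ⋃₀ (g '' {j | j ≤ N}) = Set.accumulate g N := by
      rw [Set.sUnion_image]; rfl
    rw [this]
    exact hN

/-- One step of the construction: from an uncountable family of open sets of finite measure,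
extract a set `U` (a finite union of basic opens), a chosen element `A'`, and an uncountable
subfamily `S'` not containing `A'`, all of whose members contain `U`, with `A'` approximated
by `U` within `δ`. -/
lemma amoeba_step (S : Set (Set (ℕ → Bool))) (hS : ∀ A ∈ S, IsOpen A ∧ μC A ≠ ⊤)
    (hunc : ¬ S.Countable) {δ : ℝ≥0∞} (hδ : 0 < δ) :
    ∃ (U A' : Set (ℕ → Bool)) (S' : Set (Set (ℕ → Bool))),
      S' ⊆ S ∧ ¬ S'.Countable ∧ A' ∈ S ∧ A' ∉ S' ∧ U ⊆ A' ∧ μC (A' \ U) < δ ∧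
      ∀ B ∈ S', U ⊆ B := by
  classical
  have hex : ∀ A : Set (ℕ → Bool), ∃ t : Set (Set (ℕ → Bool)), A ∈ S →
      (t.Finite ∧ t ⊆ TopologicalSpace.countableBasis (ℕ → Bool) ∧
        ⋃₀ t ⊆ A ∧ μC (A \ ⋃₀ t) < δ) := by
    intro A
    by_cases hA : A ∈ S
    · obtain ⟨t, ht⟩ := exists_finite_basis_approx (hS A hA).1 (hS A hA).2 hδ
      exact ⟨t, fun _ => ht⟩
    · exact ⟨∅, fun h => absurd h hA⟩
  choose c hc using hex
  obtain ⟨t₀, ht₀⟩ := exists_uncountable_fiber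
    (r := {t : Set (Set (ℕ → Bool)) | t.Finite ∧ t ⊆ TopologicalSpace.countableBasis (ℕ → Bool)})
    (f := c)
    (Set.countable_setOf_finite_subset (TopologicalSpace.countable_countableBasis _))
    (fun A hA => ⟨(hc A hA).1, (hc A hA).2.1⟩) hunc
  set fib := S ∩ c ⁻¹' {t₀} with hfib
  have hfibS : fib ⊆ S := Set.inter_subset_left
  have hfibprop : ∀ B ∈ fib, ⋃₀ t₀ ⊆ B ∧ μC (B \ ⋃₀ t₀) < δ := by
    rintro B ⟨hBS, hBc⟩
    have : c B = t₀ := hBc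
    exact ⟨this ▸ (hc B hBS).2.2.1, this ▸ (hc B hBS).2.2.2⟩
  have hfibne : fib.Nonempty := by
    rcases Set.eq_empty_or_nonempty fib with h | h
    · exact absurd (h ▸ Set.countable_empty) ht₀
    · exact h
  obtain ⟨A', hA'⟩ := hfibne
  refine ⟨⋃₀ t₀, A', fib \ {A'}, (Set.diff_subset).trans hfibS, ?_, hfibS hA',
    fun h => h.2 rfl, (hfibprop A' hA').1, (hfibprop A' hA').2, fun B hB =>
    (hfibprop B hB.1).1⟩
  intro hcnt
  apply ht₀
  have : fib ⊆ insert A' (fib \ {A'}) := by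
    intro x hx
    by_cases hxA : x = A'
    · exact hxA ▸ Set.mem_insert _ _
    · exact Set.mem_insert_of_mem _ ⟨hx, hxA⟩
  exact (hcnt.insert A').mono this

/-- The Amoeba partial order `𝔸` has `(ω₁, ω)`-caliber: every uncountable set `T` of open
subsets of `2^ω` of measure `< 1/2` has a countably infinite subset `F` whose union still has
measure `< 1/2` (i.e. `F` has a common lower bound in `𝔸`). -/
theorem amoeba_has_caliber_omega1_omega
    (T : Set (Set (ℕ → Bool)))
    (hT : ∀ A ∈ T, IsOpen A ∧ μC A < 1 / 2)
    (hunc : ¬ T.Countable) :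
    ∃ F ⊆ T, F.Countable ∧ F.Infinite ∧ μC (⋃₀ F) < 1 / 2 := by
  classical
  have hhalf : (1 / 2 : ℝ≥0∞) ≠ ⊤ := by norm_num
  -- Step 1: an uncountable subfamily with a uniform gap ε below 1/2
  have hε : ∀ A : Set (ℕ → Bool), ∃ n : ℕ, A ∈ T → μC A + 2⁻¹ ^ n < 1 / 2 := by
    intro A
    by_cases hA : A ∈ T
    · have hlt : μC A < 1 / 2 := (hT A hA).2
      have hpos : (1 / 2 : ℝ≥0∞) - μC A ≠ 0 := by
        rw [← pos_iff_ne_zero, tsub_pos_iff_lt]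
        exact hlt
      obtain ⟨n, hn⟩ := ENNReal.exists_inv_two_pow_lt hpos
      refine ⟨n, fun _ => ?_⟩
      have h1 : 2⁻¹ ^ n + μC A < (1 / 2 - μC A) + μC A :=
        ENNReal.add_lt_add_right (ne_top_of_lt hlt) hn
      rw [tsub_add_cancel_of_le hlt.le] at h1
      rwa [add_comm]
    · exact ⟨0, fun h => absurd h hA⟩
  choose nf hnf using hε
  obtain ⟨n₀, hn₀⟩ := exists_uncountable_fiber (r := (Set.univ : Set ℕ))
    Set.countable_univ (fun A _ => Set.mem_univ _) hunc
  set ε : ℝ≥0∞ := 2⁻¹ ^ n₀ with hεdef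
  set T₁ : Set (Set (ℕ → Bool)) := T ∩ nf ⁻¹' {n₀} with hT₁def
  have hT₁T : T₁ ⊆ T := Set.inter_subset_left
  have hT₁unc : ¬ T₁.Countable := hn₀
  have hT₁gap : ∀ A ∈ T₁, μC A + ε < 1 / 2 := by
    rintro A ⟨hAT, hAn⟩
    have h : nf A = n₀ := hAn
    rw [hεdef, ← h]
    exact hnf A hAT
  have hεpos : 0 < ε := by
    apply ENNReal.pow_pos
    norm_num
  have hεtop : ε ≠ ⊤ := by
    apply ENNReal.pow_ne_top
    norm_num
  have hT₁ne : T₁.Nonempty := by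
    rcases Set.eq_empty_or_nonempty T₁ with h | h
    · exact absurd (h ▸ Set.countable_empty) hT₁unc
    · exact h
  have hεle : ε ≤ 1 / 2 := by
    obtain ⟨A₀, hA₀⟩ := hT₁ne
    calc ε ≤ μC A₀ + ε := le_add_self
      _ ≤ 1 / 2 := (hT₁gap A₀ hA₀).le
  -- the error budget
  set δk : ℕ → ℝ≥0∞ := fun k => ε * 2⁻¹ ^ (k + 2) with hδkdef
  have hδkpos : ∀ k, 0 < δk k := by
    intro k
    apply ENNReal.mul_pos hεpos.ne'
    apply (ENNReal.pow_pos (by norm_num) _).ne'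
  -- Step 2: the recursive construction
  have key : ∀ (k : ℕ) (S : Set (Set (ℕ → Bool))),
      ∃ (U A' : Set (ℕ → Bool)) (S' : Set (Set (ℕ → Bool))),
        (S ⊆ T₁ ∧ ¬ S.Countable) →
        (S' ⊆ S ∧ ¬ S'.Countable ∧ A' ∈ S ∧ A' ∉ S' ∧ U ⊆ A' ∧ μC (A' \ U) < δk k ∧
          ∀ B ∈ S', U ⊆ B) := by
    intro k S
    by_cases hS : S ⊆ T₁ ∧ ¬ S.Countable
    · obtain ⟨U, A', S', h⟩ := amoeba_step S
        (fun A hA => ⟨(hT A (hT₁T (hS.1 hA))).1,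
          ne_top_of_lt (lt_of_lt_of_le (hT A (hT₁T (hS.1 hA))).2 le_top)⟩)
        hS.2 (hδkpos k)
      exact ⟨U, A', S', fun _ => h⟩
    · exact ⟨∅, ∅, ∅, fun h => absurd h hS⟩
  choose Uf Af Sf hspec using key
  set SS : ℕ → Set (Set (ℕ → Bool)) := fun k => Nat.rec T₁ (fun n ih => Sf n ih) k
    with hSSdef
  have hSSsucc : ∀ k, SS (k + 1) = Sf k (SS k) := fun k => rfl
  have hinv : ∀ k, SS k ⊆ T₁ ∧ ¬ (SS k).Countable := by
    intro k
    induction k with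
    | zero => exact ⟨subset_rfl, hT₁unc⟩
    | succ k ih =>
      have h := hspec k (SS k) ih
      exact ⟨h.1.trans ih.1, h.2.1⟩
  set U : ℕ → Set (ℕ → Bool) := fun k => Uf k (SS k) with hUdef
  set A : ℕ → Set (ℕ → Bool) := fun k => Af k (SS k) with hAdef
  have spec : ∀ k, SS (k + 1) ⊆ SS k ∧ ¬ (SS (k + 1)).Countable ∧ A k ∈ SS k ∧
      A k ∉ SS (k + 1) ∧ U k ⊆ A k ∧ μC (A k \ U k) < δk k ∧
      ∀ B ∈ SS (k + 1), U k ⊆ B := fun k => hspec k (SS k) (hinv k)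
  have hanti : ∀ j k, j ≤ k → SS k ⊆ SS j := by
    intro j k hjk
    induction k with
    | zero => rw [Nat.le_zero.1 hjk]
    | succ k ih =>
      rcases Nat.lt_or_ge j (k + 1) with h | h
      · exact (spec k).1.trans (ih (Nat.lt_succ_iff.1 h))
      · rw [Nat.le_antisymm hjk h]
  have hAmem : ∀ k, A k ∈ SS k := fun k => (spec k).2.2.1
  have hUA : ∀ j k, j ≤ k → U j ⊆ A k := by
    intro j k hjk
    rcases eq_or_lt_of_le hjk with rfl | h
    · exact (spec j).2.2.2.2.1
    · exact (spec j).2.2.2.2.2.2 (A k) (hanti (j + 1) k h (hAmem k))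
  have hAne : ∀ j k, j < k → A k ≠ A j := by
    intro j k h hEq
    exact (spec j).2.2.2.1 (hEq ▸ hanti (j + 1) k h (hAmem k))
  have hAinj : Function.Injective A := by
    intro a b hab
    by_contra hne
    rcases Ne.lt_or_gt hne with h | h
    · exact hAne a b h hab.symm
    · exact hAne b a h hab
  refine ⟨Set.range A, ?_, Set.countable_range A, Set.infinite_range_of_injective hAinj, ?_⟩
  · rintro _ ⟨k, rfl⟩
    exact hT₁T ((hinv k).1 (hAmem k))
  -- Step 3: the measure estimate
  rw [Set.sUnion_range]
  have hcover : (⋃ k, A k) ⊆ (⋃ k, U k) ∪ ⋃ k, (A k \ U k) := by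
    intro x hx
    obtain ⟨k, hk⟩ := Set.mem_iUnion.1 hx
    by_cases hU : x ∈ U k
    · exact Or.inl (Set.mem_iUnion.2 ⟨k, hU⟩)
    · exact Or.inr (Set.mem_iUnion.2 ⟨k, hk, hU⟩)
  have bound1 : μC (⋃ k, U k) ≤ 1 / 2 - ε := by
    rw [measure_iUnion_eq_iSup_accumulate (f := U)]
    apply iSup_le
    intro N
    have hsubA : Set.accumulate U N ⊆ A N := by
      intro x hx
      obtain ⟨j, hjN, hj⟩ := Set.mem_iUnion₂.1 hx
      exact hUA j N hjN hj
    calc μC (Set.accumulate U N) ≤ μC (A N) := measure_mono hsubA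
      _ ≤ 1 / 2 - ε := ENNReal.le_sub_of_add_le_right hεtop
        (hT₁gap (A N) ((hinv N).1 (hAmem N))).le
  have bound2 : μC (⋃ k, (A k \ U k)) ≤ ε * 2⁻¹ := by
    calc μC (⋃ k, (A k \ U k)) ≤ ∑' k, μC (A k \ U k) := measure_iUnion_le _
      _ ≤ ∑' k, δk k := ENNReal.tsum_le_tsum fun k => ((spec k).2.2.2.2.2.1).le
      _ = ε * 2⁻¹ := by
        have h2 : ∀ k : ℕ, δk k = (ε * 2⁻¹ ^ 2) * 2⁻¹ ^ k := by
          intro k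
          rw [hδkdef]
          ring
        simp only [h2]
        rw [ENNReal.tsum_mul_left, ENNReal.tsum_geometric, ENNReal.one_sub_inv_two,
          inv_inv]
        rw [show (ε * 2⁻¹ ^ 2) * 2 = ε * (2⁻¹ * (2⁻¹ * 2)) by ring]
        rw [ENNReal.inv_mul_cancel (by norm_num) (by norm_num), mul_one]
  calc μC (⋃ k, A k) ≤ μC ((⋃ k, U k) ∪ ⋃ k, (A k \ U k)) := measure_mono hcover
    _ ≤ μC (⋃ k, U k) + μC (⋃ k, (A k \ U k)) := measure_union_le _ _
    _ ≤ (1 / 2 - ε) + ε * 2⁻¹ := add_le_add bound1 bound2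
    _ < (1 / 2 - ε) + ε := by
      apply ENNReal.add_lt_add_left (ne_top_of_le_ne_top hhalf tsub_le_self)
      have := ENNReal.half_lt_self hεpos.ne' hεtop
      rwa [ENNReal.div_eq_inv_mul, mul_comm] at this
    _ = 1 / 2 := tsub_add_cancel_of_le hεle

end
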